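/- The deterministic query complexity of the partial function γ'_n is at most 2n + 2, where γ'_n : {0,1}^{3n} → {0,1,*} is defined on (x,y,z) ∈ ({0,1}^n)^3 by: γ'_n = ⋁_i (y_i ∧ z_i) if x = 0^n; γ'_n = ⋁_i z_i if x = 1^n; γ'_n = ⋁_i (x_i ∨ y_i) if z = 1^n; γ'_n = 0 if z = 0^n; and γ'_n = * otherwise. (Here a decision tree computes γ'_n if on every input where γ'_n is defined it outputs the defined value.) -/

import Mathlib

/-- A deterministic decision tree on `n` Boolean variables. -/
inductive DTree (n : ℕ) where
  | leaf : Bool → DTree n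
  | node : Fin n → DTree n → DTree n → DTree n

namespace DTree

variable {n : ℕ}

def eval : DTree n → (Fin n → Bool) → Bool
  | leaf b, _ => b
  | node i t0 t1, x => if x i then t1.eval x else t0.eval x

/-- The number of queries the tree makes on input `x`. -/
def cost : DTree n → (Fin n → Bool) → ℕ
  | leaf _, _ => 0
  | node i t0 t1, x => (if x i then t1.cost x else t0.cost x) + 1

end DTree

/-- The variable `x i` among the `3n` variables. -/
def xV (n : ℕ) (i : Fin n) : Fin (n + n + n) := Fin.castAdd n (Fin.castAdd n i)

/-- The variable `y i` among the `3n` variables. -/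
def yV (n : ℕ) (i : Fin n) : Fin (n + n + n) := Fin.castAdd n (Fin.natAdd n i)

/-- The variable `z i` among the `3n` variables. -/
def zV (n : ℕ) (i : Fin n) : Fin (n + n + n) := Fin.natAdd (n + n) i

/-- The partial function `γ'_n : {0,1}^{3n} → {0,1,*}` (`none` is `*`):
`⋁ᵢ (yᵢ ∧ zᵢ)` if `x = 0ⁿ`; `⋁ᵢ zᵢ` if `x = 1ⁿ`; `⋁ᵢ (xᵢ ∨ yᵢ)` if `z = 1ⁿ`;
`0` if `z = 0ⁿ`; `*` otherwise. -/
def gammaP (n : ℕ) (w : Fin (n + n + n) → Bool) : Option Bool :=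
  if ∀ i, w (xV n i) = false then
    some (decide (∃ i : Fin n, w (yV n i) = true ∧ w (zV n i) = true))
  else if ∀ i, w (xV n i) = true then
    some (decide (∃ i : Fin n, w (zV n i) = true))
  else if ∀ i, w (zV n i) = true then
    some (decide (∃ i : Fin n, w (xV n i) = true ∨ w (yV n i) = true))
  else if ∀ i, w (zV n i) = false then
    some false
  else none

/-- A decision tree computes a partial function if it outputs the defined value on every
input where the function is defined. -/
def DTree.ComputesPartial {m : ℕ} (T : DTree m) (g : (Fin m → Bool) → Option Bool) : Prop :=
  ∀ w b, g w = some b → T.eval w = b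

namespace GammaAux

def orT {m : ℕ} : List (Fin m) → DTree m
  | [] => .leaf false
  | i :: l => .node i (orT l) (.leaf true)

lemma orT_eval {m} (l : List (Fin m)) (w : Fin m → Bool) :
    (orT l).eval w = l.any w := by
  induction l with
  | nil => rfl
  | cons i l ih =>
    simp only [orT, DTree.eval, List.any_cons]
    cases h : w i <;> simp [ih, h]

lemma orT_cost {m} (l : List (Fin m)) (w : Fin m → Bool) :
    (orT l).cost w ≤ l.length := by
  induction l with
  | nil => simp [orT, DTree.cost]
  | cons i l ih =>
    simp only [orT, DTree.cost, List.length_cons]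
    cases h : w i <;> simp [h, DTree.cost] <;> omega

def andOrT {m : ℕ} : List (Fin m × Fin m) → DTree m
  | [] => .leaf false
  | p :: l => .node p.1 (andOrT l) (.node p.2 (andOrT l) (.leaf true))

lemma andOrT_eval {m} (L : List (Fin m × Fin m)) (w : Fin m → Bool) :
    (andOrT L).eval w = L.any (fun p => w p.1 && w p.2) := by
  induction L with
  | nil => rfl
  | cons p l ih =>
    simp only [andOrT, DTree.eval, List.any_cons]
    cases h1 : w p.1 <;> cases h2 : w p.2 <;> simp [ih, h1, h2]

lemma andOrT_cost {m} (L : List (Fin m × Fin m)) (w : Fin m → Bool) :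
    (andOrT L).cost w ≤ 2 * L.length := by
  induction L with
  | nil => simp [andOrT, DTree.cost]
  | cons p l ih =>
    simp only [andOrT, DTree.cost, List.length_cons]
    cases h1 : w p.1 <;> cases h2 : w p.2 <;> simp [h1, h2, DTree.cost] <;> omega

lemma any_yz_map {n : ℕ} (l : List (Fin n)) (w : Fin (n+n+n) → Bool) :
    ((l.map fun j => (yV n j, zV n j)).any fun p => w p.1 && w p.2)
      = l.any fun j => w (yV n j) && w (zV n j) := by
  induction l with
  | nil => rfl
  | cons a t iht => simp [iht]

def pairC (n : ℕ) : List (Fin n) → DTree (n + n + n)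
  | [] => .leaf false
  | i :: l => .node (yV n i)
      (.node (xV n i) (pairC n l) (.leaf true))
      (.node (zV n i) (andOrT (l.map fun j => (yV n j, zV n j))) (.leaf true))

lemma pairC_eval_x (n : ℕ) (l : List (Fin n)) (w : Fin (n+n+n) → Bool)
    (hx : ∀ i ∈ l, w (xV n i) = false) :
    (pairC n l).eval w = l.any (fun i => w (yV n i) && w (zV n i)) := by
  induction l with
  | nil => rfl
  | cons i l ih =>
    have hxi := hx i (by simp)
    simp only [pairC, DTree.eval, List.any_cons]
    cases hy : w (yV n i)
    · simp [hxi, ih (fun j hj => hx j (by simp [hj]))]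
    · cases hz : w (zV n i)
      · simp only [hy, hz, andOrT_eval, List.any_map, if_true, Bool.true_and,
          Bool.false_eq_true, if_false, Bool.false_or, ite_true]
        rfl
      · simp [hy, hz]

lemma pairC_eval_z (n : ℕ) (l : List (Fin n)) (w : Fin (n+n+n) → Bool)
    (hz : ∀ i ∈ l, w (zV n i) = true) :
    (pairC n l).eval w = l.any (fun i => w (xV n i) || w (yV n i)) := by
  induction l with
  | nil => rfl
  | cons i l ih =>
    have hzi := hz i (by simp)
    simp only [pairC, DTree.eval, List.any_cons]
    cases hy : w (yV n i)
    · cases hx : w (xV n i)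
      · simp [hx, hy, ih (fun j hj => hz j (by simp [hj]))]
      · simp [hx, hy]
    · simp [hzi, hy]

lemma pairC_cost (n : ℕ) (l : List (Fin n)) (w : Fin (n+n+n) → Bool) :
    (pairC n l).cost w ≤ 2 * l.length := by
  induction l with
  | nil => simp [pairC, DTree.cost]
  | cons i l ih =>
    have h2 := andOrT_cost (l.map fun j => (yV n j, zV n j)) w
    simp only [List.length_map] at h2
    simp only [pairC, DTree.cost, List.length_cons]
    cases hy : w (yV n i)
    · cases hx : w (xV n i) <;> simp [hx, hy, DTree.cost] <;> omega
    · cases hz : w (zV n i) <;> simp [hy, hz, DTree.cost] <;> omega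

def topT (m : ℕ) : DTree ((m+1) + (m+1) + (m+1)) :=
  .node (xV (m+1) 0)
    (.node (zV (m+1) 0)
      (andOrT ((List.finRange (m+1)).map fun i => (yV (m+1) i, zV (m+1) i)))
      (.node (yV (m+1) 0)
        (pairC (m+1) ((List.finRange m).map Fin.succ))
        (.leaf true)))
    (orT ((List.finRange (m+1)).map (zV (m+1))))

lemma any_map' {α β : Type*} (l : List α) (g : α → β) (f : β → Bool) :
    (l.map g).any f = l.any (fun a => f (g a)) := by
  induction l with
  | nil => rfl
  | cons a t ih => simp [ih]

lemma any_finRange_eq_decide {k : ℕ} (p : Fin k → Bool) :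
    (List.finRange k).any p = decide (∃ i, p i = true) := by
  by_cases he : ∃ i, p i = true
  · obtain ⟨i, hi⟩ := he
    have h1 : (List.finRange k).any p = true := by
      simp [List.any_eq_true, List.mem_finRange]
      exact ⟨i, hi⟩
    rw [h1, decide_eq_true (⟨i, hi⟩ : ∃ i, p i = true)]
  · have h1 : (List.finRange k).any p = false := by
      simp only [List.any_eq_false, List.mem_finRange]
      intro i _
      simp only [Bool.not_eq_true]
      cases h : p i
      · rfl
      · exact absurd ⟨i, h⟩ he
    rw [h1, decide_eq_false he]

end GammaAux

open GammaAux in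
theorem gammaP_qc_succ (m : ℕ) :
    ∃ T : DTree ((m+1) + (m+1) + (m+1)), T.ComputesPartial (gammaP (m+1)) ∧
      ∀ w, T.cost w ≤ (m+1) + (m+1) + 2 := by
  refine ⟨topT m, ?_, ?_⟩
  · intro w b hb
    unfold gammaP at hb
    by_cases hx0 : ∀ i, w (xV (m+1) i) = false
    · rw [if_pos hx0] at hb
      injection hb with hb
      subst hb
      simp only [topT, DTree.eval, hx0 0, Bool.false_eq_true, if_false]
      cases hz : w (zV (m+1) 0)
      · simp only [Bool.false_eq_true, if_false]
        rw [andOrT_eval, any_yz_map, any_finRange_eq_decide]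
        exact decide_eq_decide.mpr (by simp [Bool.and_eq_true])
      · simp only [if_true]
        cases hy : w (yV (m+1) 0)
        · simp only [Bool.false_eq_true, if_false]
          rw [pairC_eval_x _ _ _ (fun i _ => hx0 i), any_map', any_finRange_eq_decide]
          refine decide_eq_decide.mpr ?_
          rw [Fin.exists_fin_succ]
          simp [hy, Bool.and_eq_true]
        · simp only [if_true]
          symm
          rw [decide_eq_true_eq]
          exact ⟨0, hy, hz⟩
    · rw [if_neg hx0] at hb
      push_neg at hx0
      obtain ⟨i0, hi0⟩ := hx0
      simp only [ne_eq, Bool.not_eq_false] at hi0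
      by_cases hx1 : ∀ i, w (xV (m+1) i) = true
      · rw [if_pos hx1] at hb
        injection hb with hb
        subst hb
        simp only [topT, DTree.eval, hx1 0, if_true]
        rw [orT_eval, any_map', any_finRange_eq_decide]
      · rw [if_neg hx1] at hb
        by_cases hz1 : ∀ i, w (zV (m+1) i) = true
        · rw [if_pos hz1] at hb
          injection hb with hb
          have hbtrue : b = true := by
            rw [← hb, decide_eq_true_eq]
            exact ⟨i0, Or.inl hi0⟩
          subst hbtrue
          simp only [topT, DTree.eval]
          cases hx : w (xV (m+1) 0)
          · simp only [Bool.false_eq_true, if_false, hz1 0, if_true]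
            cases hy : w (yV (m+1) 0)
            · simp only [Bool.false_eq_true, if_false]
              rw [pairC_eval_z _ _ _ (fun i _ => hz1 i), any_map']
              have : ∃ j : Fin m, (w (xV (m+1) j.succ) || w (yV (m+1) j.succ)) = true := by
                rcases Fin.exists_fin_succ.mp (⟨i0, hi0⟩ : ∃ i, w (xV (m+1) i) = true) with h0 | ⟨j, hj⟩
                · exact absurd h0 (by simp [hx])
                · exact ⟨j, by simp [hj]⟩
              obtain ⟨j, hj⟩ := this
              rw [List.any_eq_true]
              exact ⟨j, List.mem_finRange j, hj⟩
            · simp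
          · simp only [if_true]
            rw [orT_eval, any_map', List.any_eq_true]
            exact ⟨0, List.mem_finRange 0, hz1 0⟩
        · rw [if_neg hz1] at hb
          by_cases hz0 : ∀ i, w (zV (m+1) i) = false
          · rw [if_pos hz0] at hb
            injection hb with hb
            subst hb
            simp only [topT, DTree.eval]
            cases hx : w (xV (m+1) 0)
            · simp only [Bool.false_eq_true, if_false, hz0 0]
              rw [andOrT_eval, any_yz_map, List.any_eq_false]
              intro i _
              simp [hz0 i]
            · simp only [if_true]
              rw [orT_eval, any_map', List.any_eq_false]
              intro i _
              simp [hz0 i]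
          · rw [if_neg hz0] at hb
            exact absurd hb (by simp)
  · intro w
    have h1 := orT_cost ((List.finRange (m+1)).map (zV (m+1))) w
    have h2 := andOrT_cost ((List.finRange (m+1)).map fun i => (yV (m+1) i, zV (m+1) i)) w
    have h3 := pairC_cost (m+1) ((List.finRange m).map Fin.succ) w
    simp only [List.length_map, List.length_finRange] at h1 h2 h3
    simp only [topT, DTree.cost]
    cases hx : w (xV (m+1) 0) <;> cases hz : w (zV (m+1) 0) <;>
      cases hy : w (yV (m+1) 0) <;> simp [hx, hz, hy, DTree.cost] <;> omega

/-- the deterministic query complexity of the partial function `γ'_n` is at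
most `2n + 2`. -/
theorem gammaP_query_complexity (n : ℕ) :
    ∃ T : DTree (n + n + n), T.ComputesPartial (gammaP n) ∧ ∀ w, T.cost w ≤ n + n + 2 := by
  cases n with
  | zero =>
    refine ⟨.leaf false, ?_, fun w => by simp [DTree.cost]⟩
    intro w b hb
    simp [gammaP] at hb
    simp [DTree.eval, ← hb]
  | succ m => exact gammaP_qc_succ m
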